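/- arXiv:2405.04255 — 2 statements merged into one kernel-verified Lean document; each statement's English description precedes it below -/
import Mathlib

section
/- The metric g = (c²+u²)dt² + du² on I × J (c > 0 constant) has Gauss curvature K(t,u) = -c²/(c²+u²)², and this K satisfies the Ricci condition K·ΔK - ‖∇K‖² - 4K³ = 0, where Δ and ∇ are taken with respect to g. -/
/-- Euclidean dot product on `ℝ³`. -/
def dot3 (v w : Fin 3 → ℝ) : ℝ := v 0 * w 0 + v 1 * w 1 + v 2 * w 2

/-- Cross product on `ℝ³`. -/
def cross3 (v w : Fin 3 → ℝ) : Fin 3 → ℝ :=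
  ![v 1 * w 2 - v 2 * w 1, v 2 * w 0 - v 0 * w 2, v 0 * w 1 - v 1 * w 0]

/-- Euclidean norm on `ℝ³`. -/
noncomputable def norm3 (v : Fin 3 → ℝ) : ℝ := Real.sqrt (dot3 v v)

/-- For the metric `g = (c²+u²)dt² + du²` (so `E = c²+u²`, `G = 1`), the Gauss curvature is
`K = -(√E)''/√E`, the Laplacian of a function of `u` alone is `Δf = (1/√E)(√E f')'`
and `‖∇f‖² = (f')²`. -/
theorem stmt_4 (c : ℝ) (hc : 0 < c) (K : ℝ → ℝ)
    (hK : ∀ u, K u = -c ^ 2 / (c ^ 2 + u ^ 2) ^ 2) :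
    ∀ u : ℝ,
      (-(deriv (deriv (fun v => Real.sqrt (c ^ 2 + v ^ 2))) u) / Real.sqrt (c ^ 2 + u ^ 2)
          = K u) ∧
      K u * ((1 / Real.sqrt (c ^ 2 + u ^ 2))
            * deriv (fun v => Real.sqrt (c ^ 2 + v ^ 2) * deriv K v) u)
          - (deriv K u) ^ 2 - 4 * (K u) ^ 3 = 0 := by
  have hKfun : K = fun v => -c ^ 2 / (c ^ 2 + v ^ 2) ^ 2 := funext hK
  have hSpos : ∀ x : ℝ, 0 < c ^ 2 + x ^ 2 := fun x => by positivity
  have hSne : ∀ x : ℝ, c ^ 2 + x ^ 2 ≠ 0 := fun x => (hSpos x).ne'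
  have hrpos : ∀ x : ℝ, 0 < Real.sqrt (c ^ 2 + x ^ 2) :=
    fun x => Real.sqrt_pos.mpr (hSpos x)
  have hrne : ∀ x : ℝ, Real.sqrt (c ^ 2 + x ^ 2) ≠ 0 := fun x => (hrpos x).ne'
  have hr2 : ∀ x : ℝ, Real.sqrt (c ^ 2 + x ^ 2) ^ 2 = c ^ 2 + x ^ 2 :=
    fun x => Real.sq_sqrt (hSpos x).le
  -- derivative of the inner polynomial
  have hpoly : ∀ x : ℝ, HasDerivAt (fun v : ℝ => c ^ 2 + v ^ 2) (2 * x) x := by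
    intro x
    simpa using ((hasDerivAt_pow 2 x).const_add (c ^ 2))
  -- derivative of sqrt(c²+v²)
  have hs : ∀ x : ℝ, HasDerivAt (fun v => Real.sqrt (c ^ 2 + v ^ 2))
      (x / Real.sqrt (c ^ 2 + x ^ 2)) x := by
    intro x
    have := (Real.hasDerivAt_sqrt (hSne x)).comp x (hpoly x)
    refine this.congr_deriv ?_
    field_simp
  have hderiv_s : deriv (fun v => Real.sqrt (c ^ 2 + v ^ 2))
      = fun x => x / Real.sqrt (c ^ 2 + x ^ 2) := funext fun x => (hs x).deriv
  -- derivative of K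
  have hK' : ∀ x : ℝ, HasDerivAt K (4 * c ^ 2 * x / (c ^ 2 + x ^ 2) ^ 3) x := by
    intro x
    have hpow : HasDerivAt (fun v : ℝ => (c ^ 2 + v ^ 2) ^ 2)
        (2 * (c ^ 2 + x ^ 2) ^ 1 * (2 * x)) x := (hpoly x).pow 2
    have hd := (hasDerivAt_const x (-c ^ 2 : ℝ)).div hpow (pow_ne_zero 2 (hSne x))
    rw [hKfun]
    refine hd.congr_deriv ?_
    field_simp
    ring
  have hKd : deriv K = fun x => 4 * c ^ 2 * x / (c ^ 2 + x ^ 2) ^ 3 :=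
    funext fun x => (hK' x).deriv
  intro u
  constructor
  · -- Gauss curvature
    rw [hderiv_s]
    have hq : HasDerivAt (fun x : ℝ => x / Real.sqrt (c ^ 2 + x ^ 2))
        ((1 * Real.sqrt (c ^ 2 + u ^ 2) - u * (u / Real.sqrt (c ^ 2 + u ^ 2)))
          / Real.sqrt (c ^ 2 + u ^ 2) ^ 2) u :=
      (hasDerivAt_id u).div (hs u) (hrne u)
    rw [hq.deriv, hK u]
    have h2 := hr2 u
    set r := Real.sqrt (c ^ 2 + u ^ 2) with hrdef
    have hrne' : r ≠ 0 := hrne u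
    have hc2 : c ^ 2 = r ^ 2 - u ^ 2 := by linarith
    rw [← h2, hc2]
    field_simp
  · -- Ricci condition
    have hinner : (fun v => Real.sqrt (c ^ 2 + v ^ 2) * deriv K v)
        = fun v => Real.sqrt (c ^ 2 + v ^ 2) * (4 * c ^ 2 * v / (c ^ 2 + v ^ 2) ^ 3) := by
      funext v; rw [hKd]
    rw [hinner]
    -- derivative of 4c²v/(c²+v²)³
    have hnum : HasDerivAt (fun v : ℝ => 4 * c ^ 2 * v) (4 * c ^ 2) u := by
      simpa using (hasDerivAt_id u).const_mul (4 * c ^ 2)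
    have hden : HasDerivAt (fun v : ℝ => (c ^ 2 + v ^ 2) ^ 3)
        (3 * (c ^ 2 + u ^ 2) ^ 2 * (2 * u)) u := (hpoly u).pow 3
    have hfrac := hnum.div hden (pow_ne_zero 3 (hSne u))
    have hprod : HasDerivAt (fun v => Real.sqrt (c ^ 2 + v ^ 2) * (4 * c ^ 2 * v / (c ^ 2 + v ^ 2) ^ 3)) _ u :=
      (hs u).mul hfrac
    rw [hprod.deriv, hKd, hK u]
    have h2 := hr2 u
    have hS := hSne u
    set r := Real.sqrt (c ^ 2 + u ^ 2) with hrdef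
    have hrne' : r ≠ 0 := hrne u
    have hc2 : c ^ 2 = r ^ 2 - u ^ 2 := by linarith
    rw [← h2, hc2]
    field_simp
    ring
end

section
/- The curve α(t) = (-cos(t)sech(t), -sin(t)sech(t), tanh(t) - t) has constant torsion equal to 1. -/
open Real

noncomputable def D1 (t : ℝ) : Fin 3 → ℝ :=
  ![(sin t * cosh t + cos t * sinh t) / cosh t ^ 2,
    (sin t * sinh t - cos t * cosh t) / cosh t ^ 2,
    -(sinh t ^ 2) / cosh t ^ 2]

noncomputable def D2 (t : ℝ) : Fin 3 → ℝ :=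
  ![(-(2 * sin t * cosh t * sinh t) - 2 * cos t * sinh t ^ 2 + 2 * cos t * cosh t ^ 2) / cosh t ^ 3,
    (-(2 * sin t * sinh t ^ 2) + 2 * sin t * cosh t ^ 2 + 2 * cos t * cosh t * sinh t) / cosh t ^ 3,
    (2 * sinh t ^ 3 - 2 * cosh t ^ 2 * sinh t) / cosh t ^ 3]

noncomputable def D3 (t : ℝ) : Fin 3 → ℝ :=
  ![(6 * sin t * cosh t * sinh t ^ 2 - 4 * sin t * cosh t ^ 3 + 6 * cos t * sinh t ^ 3
      - 8 * cos t * cosh t ^ 2 * sinh t) / cosh t ^ 4,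
    (6 * sin t * sinh t ^ 3 - 8 * sin t * cosh t ^ 2 * sinh t - 6 * cos t * cosh t * sinh t ^ 2
      + 4 * cos t * cosh t ^ 3) / cosh t ^ 4,
    (-(6 * sinh t ^ 4) + 8 * cosh t ^ 2 * sinh t ^ 2 - 2 * cosh t ^ 4) / cosh t ^ 4]

lemma hasDerivAt_D1 (α : ℝ → Fin 3 → ℝ)
    (hα : ∀ t, α t = ![-(Real.cos t * (1 / Real.cosh t)),
                       -(Real.sin t * (1 / Real.cosh t)), Real.tanh t - t]) (t : ℝ) :
    HasDerivAt α (D1 t) t := by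
  have hchne : cosh t ≠ 0 := (cosh_pos t).ne'
  rw [funext hα]
  rw [hasDerivAt_pi]
  intro i
  fin_cases i
  · show HasDerivAt (fun u => -(Real.cos u * (1 / Real.cosh u))) (D1 t 0) t
    have h : HasDerivAt (fun u => -(cos u / cosh u))
        (-((-sin t * cosh t - cos t * sinh t) / cosh t ^ 2)) t :=
      (((Real.hasDerivAt_cos t).div (Real.hasDerivAt_cosh t) hchne)).neg
    have hf : (fun u => -(Real.cos u * (1 / Real.cosh u))) = (fun u => -(cos u / cosh u)) := by
      funext u; rw [mul_one_div]
    rw [hf]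
    convert h using 1
    simp [D1]; ring
  · show HasDerivAt (fun u => -(Real.sin u * (1 / Real.cosh u))) (D1 t 1) t
    have h : HasDerivAt (fun u => -(sin u / cosh u))
        (-((cos t * cosh t - sin t * sinh t) / cosh t ^ 2)) t :=
      (((Real.hasDerivAt_sin t).div (Real.hasDerivAt_cosh t) hchne)).neg
    have hf : (fun u => -(Real.sin u * (1 / Real.cosh u))) = (fun u => -(sin u / cosh u)) := by
      funext u; rw [mul_one_div]
    rw [hf]
    convert h using 1
    simp [D1]; ring
  · show HasDerivAt (fun u => Real.tanh u - u) (D1 t 2) t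
    have h : HasDerivAt (fun u => sinh u / cosh u - u)
        ((cosh t * cosh t - sinh t * sinh t) / cosh t ^ 2 - 1) t :=
      (((Real.hasDerivAt_sinh t).div (Real.hasDerivAt_cosh t) hchne)).sub
        (hasDerivAt_id t)
    have hf : (fun u => Real.tanh u - u) = fun u => sinh u / cosh u - u := by
      funext u; rw [Real.tanh_eq_sinh_div_cosh]
    rw [hf]
    convert h using 1
    simp only [D1, Matrix.cons_val_two, Matrix.tail_cons, Matrix.head_cons]
    field_simp
    nlinarith [Real.cosh_sq t]

lemma hasDerivAt_D2 (t : ℝ) : HasDerivAt D1 (D2 t) t := by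
  have hchne : cosh t ≠ 0 := (cosh_pos t).ne'
  rw [hasDerivAt_pi]
  intro i
  have hch2 : HasDerivAt (fun u => cosh u ^ 2) (2 * cosh t ^ 1 * sinh t) t :=
    (Real.hasDerivAt_cosh t).pow 2
  fin_cases i
  · have hnum : HasDerivAt (fun u => sin u * cosh u + cos u * sinh u)
        ((cos t * cosh t + sin t * sinh t) + (-sin t * sinh t + cos t * cosh t)) t :=
      ((Real.hasDerivAt_sin t).mul (Real.hasDerivAt_cosh t)).add
        ((Real.hasDerivAt_cos t).mul (Real.hasDerivAt_sinh t))
    have h := hnum.div hch2 (pow_ne_zero 2 hchne)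
    show HasDerivAt (fun u => D1 u 0) (D2 t 0) t
    have hf : (fun u => D1 u 0) = fun u => (sin u * cosh u + cos u * sinh u) / cosh u ^ 2 := by
      funext u; simp [D1]
    rw [hf]
    refine h.congr_deriv ?_
    simp [D2]
    field_simp; ring
  · have hnum : HasDerivAt (fun u => sin u * sinh u - cos u * cosh u)
        ((cos t * sinh t + sin t * cosh t) - (-sin t * cosh t + cos t * sinh t)) t :=
      ((Real.hasDerivAt_sin t).mul (Real.hasDerivAt_sinh t)).sub
        ((Real.hasDerivAt_cos t).mul (Real.hasDerivAt_cosh t))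
    have h := hnum.div hch2 (pow_ne_zero 2 hchne)
    show HasDerivAt (fun u => D1 u 1) (D2 t 1) t
    have hf : (fun u => D1 u 1) = fun u => (sin u * sinh u - cos u * cosh u) / cosh u ^ 2 := by
      funext u; simp [D1]
    rw [hf]
    refine h.congr_deriv ?_
    simp [D2]
    field_simp; ring
  · have hnum : HasDerivAt (fun u => -(sinh u ^ 2)) (-(2 * sinh t ^ 1 * cosh t)) t :=
      ((Real.hasDerivAt_sinh t).pow 2).neg
    have h := hnum.div hch2 (pow_ne_zero 2 hchne)
    show HasDerivAt (fun u => D1 u 2) (D2 t 2) t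
    have hf : (fun u => D1 u 2) = fun u => -(sinh u ^ 2) / cosh u ^ 2 := by
      funext u; simp [D1]
    rw [hf]
    refine h.congr_deriv ?_
    simp [D2]
    field_simp; ring

lemma hasDerivAt_D3 (t : ℝ) : HasDerivAt D2 (D3 t) t := by
  have hchne : cosh t ≠ 0 := (cosh_pos t).ne'
  rw [hasDerivAt_pi]
  intro i
  have hch3 : HasDerivAt (fun u => cosh u ^ 3) (3 * cosh t ^ 2 * sinh t) t :=
    (Real.hasDerivAt_cosh t).pow 3
  have hs := Real.hasDerivAt_sin t
  have hc := Real.hasDerivAt_cos t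
  have hsh := Real.hasDerivAt_sinh t
  have hch := Real.hasDerivAt_cosh t
  fin_cases i
  · have hnum : HasDerivAt
        (fun u => -(2 * sin u * cosh u * sinh u) - 2 * cos u * sinh u ^ 2 + 2 * cos u * cosh u ^ 2)
        (-(((2 * cos t * cosh t + 2 * sin t * sinh t) * sinh t + 2 * sin t * cosh t * cosh t))
          - (2 * -sin t * sinh t ^ 2 + 2 * cos t * (2 * sinh t ^ 1 * cosh t))
          + (2 * -sin t * cosh t ^ 2 + 2 * cos t * (2 * cosh t ^ 1 * sinh t))) t := by
      exact ((((((hs.const_mul 2).mul hch).mul hsh).neg).sub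
        (((hc.const_mul 2).mul (hsh.pow 2)))).add ((hc.const_mul 2).mul (hch.pow 2)))
    have h := hnum.div hch3 (pow_ne_zero 3 hchne)
    show HasDerivAt (fun u => D2 u 0) (D3 t 0) t
    have hf : (fun u => D2 u 0) = fun u =>
        (-(2 * sin u * cosh u * sinh u) - 2 * cos u * sinh u ^ 2 + 2 * cos u * cosh u ^ 2) / cosh u ^ 3 := by
      funext u; simp [D2]
    rw [hf]
    refine h.congr_deriv ?_
    simp [D3]
    field_simp; ring
  · have hnum : HasDerivAt
        (fun u => -(2 * sin u * sinh u ^ 2) + 2 * sin u * cosh u ^ 2 + 2 * cos u * cosh u * sinh u)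
        (-((2 * cos t * sinh t ^ 2 + 2 * sin t * (2 * sinh t ^ 1 * cosh t)))
          + (2 * cos t * cosh t ^ 2 + 2 * sin t * (2 * cosh t ^ 1 * sinh t))
          + ((2 * -sin t * cosh t + 2 * cos t * sinh t) * sinh t + 2 * cos t * cosh t * cosh t)) t := by
      exact (((((hs.const_mul 2).mul (hsh.pow 2)).neg).add
        ((hs.const_mul 2).mul (hch.pow 2))).add (((hc.const_mul 2).mul hch).mul hsh))
    have h := hnum.div hch3 (pow_ne_zero 3 hchne)
    show HasDerivAt (fun u => D2 u 1) (D3 t 1) t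
    have hf : (fun u => D2 u 1) = fun u =>
        (-(2 * sin u * sinh u ^ 2) + 2 * sin u * cosh u ^ 2 + 2 * cos u * cosh u * sinh u) / cosh u ^ 3 := by
      funext u; simp [D2]
    rw [hf]
    refine h.congr_deriv ?_
    simp [D3]
    field_simp; ring
  · have hnum : HasDerivAt (fun u => 2 * sinh u ^ 3 - 2 * cosh u ^ 2 * sinh u)
        (2 * (3 * sinh t ^ 2 * cosh t)
          - ((2 * (2 * cosh t ^ 1 * sinh t)) * sinh t + 2 * cosh t ^ 2 * cosh t)) t := by
      exact (((hsh.pow 3).const_mul 2).sub (((hch.pow 2).const_mul 2).mul hsh))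
    have h := hnum.div hch3 (pow_ne_zero 3 hchne)
    show HasDerivAt (fun u => D2 u 2) (D3 t 2) t
    have hf : (fun u => D2 u 2) = fun u =>
        (2 * sinh u ^ 3 - 2 * cosh u ^ 2 * sinh u) / cosh u ^ 3 := by
      funext u; simp [D2]
    rw [hf]
    refine h.congr_deriv ?_
    simp [D3]
    field_simp; ring

theorem stmt_15 (α : ℝ → Fin 3 → ℝ)
    (hα : ∀ t, α t = ![-(Real.cos t * (1 / Real.cosh t)),
                       -(Real.sin t * (1 / Real.cosh t)), Real.tanh t - t]) :
    ∀ t : ℝ,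
      -dot3 (cross3 (deriv α t) (deriv (deriv α) t)) (deriv (deriv (deriv α)) t)
          / (norm3 (cross3 (deriv α t) (deriv (deriv α) t))) ^ 2 = 1 := by
  intro t
  have e1 : deriv α = D1 := funext fun u => (hasDerivAt_D1 α hα u).deriv
  have e2 : deriv (deriv α) = D2 := by rw [e1]; exact funext fun u => (hasDerivAt_D2 u).deriv
  have e3 : deriv (deriv (deriv α)) = D3 := by rw [e2]; exact funext fun u => (hasDerivAt_D3 u).deriv
  rw [e3, e2, e1]
  have hchne : cosh t ≠ 0 := (cosh_pos t).ne'
  have hch2 : Real.cosh t ^ 2 = Real.sinh t ^ 2 + 1 := Real.cosh_sq t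
  have hsc : Real.sin t ^ 2 + Real.cos t ^ 2 = 1 := Real.sin_sq_add_cos_sq t
  have hnum : dot3 (cross3 (D1 t) (D2 t)) (D3 t) = -4 / cosh t ^ 2 := by
    have h1 : dot3 (cross3 (D1 t) (D2 t)) (D3 t)
        = (sin t ^ 2 + cos t ^ 2) * (-4 / cosh t ^ 2) := by
      simp only [dot3, cross3, D1, D2, D3, Matrix.cons_val_zero, Matrix.cons_val_one,
        Matrix.head_cons, Matrix.cons_val_two, Matrix.tail_cons]
      field_simp
      ring
    rw [h1, hsc, one_mul]
  have hden : dot3 (cross3 (D1 t) (D2 t)) (cross3 (D1 t) (D2 t)) = 4 / cosh t ^ 2 := by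
    have h1 : dot3 (cross3 (D1 t) (D2 t)) (cross3 (D1 t) (D2 t))
        = (sin t ^ 2 + cos t ^ 2) * ((sinh t ^ 2 + (sin t ^ 2 + cos t ^ 2)) * (4 / cosh t ^ 4)) := by
      simp only [dot3, cross3, D1, D2, Matrix.cons_val_zero, Matrix.cons_val_one,
        Matrix.head_cons, Matrix.cons_val_two, Matrix.tail_cons]
      field_simp
      ring
    rw [h1, hsc, ← hch2, one_mul]
    field_simp
  have hnn : 0 ≤ dot3 (cross3 (D1 t) (D2 t)) (cross3 (D1 t) (D2 t)) := by
    rw [hden]; positivity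
  rw [norm3, Real.sq_sqrt hnn, hnum, hden]
  field_simp
end
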